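/- Fix β > 0 and Δ ∈ ℝ. On the open domain D = {(x_1,x_2) : 0 < |x_1| < x_2 < 1} define G(x_1,x_2) = x_1·artanh(x_1/x_2) + x_2·(−βΔ + log(x_2/(2(1−x_2)cosh(artanh(x_1/x_2))))) + log(1−x_2) + log(1+2e^{βΔ}) − βx_1²/2 (i.e. G = R − βx_1²/2 with R the explicit pure-model rate function). Then for (m,q) ∈ D, the gradient of G vanishes at (m,q) if and only if tanh(βm) = m/q and βΔ = log( √(q²−m²) / (2(1−q)) ). -/

import Mathlib

noncomputable section

/-- The inverse hyperbolic tangent. -/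
def artanh (x : ℝ) : ℝ := Real.log ((1 + x) / (1 - x)) / 2

/-- `G = R − βx₁²/2` built from the explicit pure-model rate function `R`. -/
def Gfun (β Δ : ℝ) (x : ℝ × ℝ) : ℝ :=
  x.1 * artanh (x.1 / x.2) +
    x.2 * (-(β * Δ) + Real.log (x.2 / (2 * (1 - x.2) * Real.cosh (artanh (x.1 / x.2))))) +
    Real.log (1 - x.2) + Real.log (1 + 2 * Real.exp (β * Δ)) - β * x.1 ^ 2 / 2

lemma tanh_eq_exp (y : ℝ) : Real.tanh y = (Real.exp (2*y) - 1) / (Real.exp (2*y) + 1) := by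
  have hE := Real.exp_pos y
  have h2 : Real.exp (2*y) = Real.exp y * Real.exp y := by
    rw [two_mul, Real.exp_add]
  rw [Real.tanh_eq_sinh_div_cosh, Real.sinh_eq, Real.cosh_eq, Real.exp_neg, h2]
  have h1 : Real.exp y + (Real.exp y)⁻¹ ≠ 0 := by positivity
  field_simp

lemma artanh_tanh' (y : ℝ) : artanh (Real.tanh y) = y := by
  have hE := Real.exp_pos (2*y)
  have h : (1 + Real.tanh y) / (1 - Real.tanh y) = Real.exp (2*y) := by
    rw [tanh_eq_exp]
    have h1 : Real.exp (2*y) + 1 ≠ 0 := by positivity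
    field_simp
    ring
  rw [artanh, h, Real.log_exp]
  ring

lemma tanh_artanh' {t : ℝ} (h : |t| < 1) : Real.tanh (artanh t) = t := by
  obtain ⟨h1, h2⟩ := abs_lt.mp h
  have ht1 : 0 < 1 - t := by linarith
  have ht2 : 0 < 1 + t := by linarith
  have hr : 0 < (1 + t) / (1 - t) := by positivity
  rw [tanh_eq_exp, artanh]
  have hh : 2 * (Real.log ((1 + t) / (1 - t)) / 2) = Real.log ((1 + t) / (1 - t)) := by ring
  rw [hh, Real.exp_log hr]
  have hd : (1 + t) / (1 - t) + 1 ≠ 0 := by positivity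
  field_simp
  ring

lemma artanh_div' {u v : ℝ} (huv : |u| < v) :
    artanh (u/v) = (Real.log (v+u) - Real.log (v-u))/2 := by
  obtain ⟨h1, h2⟩ := abs_lt.mp huv
  have hv : 0 < v := lt_of_le_of_lt (abs_nonneg u) huv
  have hvu : 0 < v - u := by linarith
  have hvpu : 0 < v + u := by linarith
  have hr : (1 + u/v) / (1 - u/v) = (v+u)/(v-u) := by
    have e1 : 1 + u/v = (v+u)/v := by field_simp
    have e2 : 1 - u/v = (v-u)/v := by field_simp
    rw [e1, e2]
    rw [div_div_div_cancel_right₀]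
    exact ne_of_gt hv
  rw [artanh, hr, Real.log_div (by positivity) (by positivity)]

lemma log_cosh_term {u v : ℝ} (huv : |u| < v) (hv1 : v < 1) :
    Real.log (v / (2*(1-v)*Real.cosh (artanh (u/v)))) =
      (Real.log (v+u) + Real.log (v-u))/2 - Real.log (2*(1-v)) := by
  obtain ⟨h1, h2⟩ := abs_lt.mp huv
  have hv : 0 < v := lt_of_le_of_lt (abs_nonneg u) huv
  have hvu : 0 < v - u := by linarith
  have hvpu : 0 < v + u := by linarith
  have h1v : 0 < 1 - v := by linarith
  have hr : (1 + u/v) / (1 - u/v) = (v+u)/(v-u) := by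
    have e1 : 1 + u/v = (v+u)/v := by field_simp
    have e2 : 1 - u/v = (v-u)/v := by field_simp
    rw [e1, e2]
    rw [div_div_div_cancel_right₀]
    exact ne_of_gt hv
  set R : ℝ := (v+u)/(v-u) with hR
  have hRpos : 0 < R := by positivity
  set s : ℝ := Real.exp (Real.log R / 2) with hs
  have hspos : 0 < s := Real.exp_pos _
  have hss : s * s = R := by
    rw [hs, ← Real.exp_add]
    rw [show Real.log R / 2 + Real.log R / 2 = Real.log R by ring, Real.exp_log hRpos]
  have hcosh : Real.cosh (artanh (u/v)) = (s + s⁻¹)/2 := by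
    rw [artanh, hr, Real.cosh_eq, ← Real.exp_neg]
  have harg : v / (2*(1-v)*((s + s⁻¹)/2)) = s*(v-u)/(2*(1-v)) := by
    have hkey : s*s*(v-u) = v+u := by
      rw [hss, hR]; field_simp
    rw [div_eq_div_iff (by positivity) (by positivity)]
    have hsinv : s * s⁻¹ = 1 := mul_inv_cancel₀ (ne_of_gt hspos)
    linear_combination (-(1-v)) * hkey + (-(1-v)*(v-u)) * hsinv
  rw [hcosh, harg]
  rw [Real.log_div (by positivity) (by positivity), Real.log_mul (by positivity) (by positivity)]
  have hlogs : Real.log s = (Real.log (v+u) - Real.log (v-u))/2 := by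
    rw [hs, Real.log_exp, hR, Real.log_div (by positivity) (by positivity)]
  rw [hlogs]
  ring

lemma Gfun_eq (β Δ : ℝ) {p : ℝ × ℝ} (h1 : |p.1| < p.2) (h2 : p.2 < 1) :
    Gfun β Δ p = p.1 * ((Real.log (p.2+p.1) - Real.log (p.2-p.1)) * (2:ℝ)⁻¹) +
      p.2 * (-(β*Δ) + (Real.log (p.2+p.1) + Real.log (p.2-p.1)) * (2:ℝ)⁻¹
              - Real.log (2*(1-p.2))) +
      Real.log (1-p.2) + Real.log (1 + 2*Real.exp (β*Δ)) - β * (p.1*p.1) * (2:ℝ)⁻¹ := by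
  rw [Gfun, log_cosh_term h1 h2, artanh_div' h1]
  ring

lemma clm_zero_iff (D : ℝ × ℝ →L[ℝ] ℝ) :
    D = 0 ↔ D (1,0) = 0 ∧ D (0,1) = 0 := by
  constructor
  · intro h; simp [h]
  · rintro ⟨h1, h2⟩
    apply ContinuousLinearMap.ext
    intro p
    have hp : D p = p.1 • D (1,0) + p.2 • D (0,1) := by
      rw [← map_smul, ← map_smul, ← map_add]
      congr 1
      simp [Prod.ext_iff]
    rw [hp, h1, h2]
    simp

set_option maxHeartbeats 2000000 in
/-- On the open domain `{0 < |x₁| < x₂ < 1}`, the gradient of `G = R − βx₁²/2` vanishes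
at `(m,q)` if and only if the mean-field fixed-point equations
`tanh(βm) = m/q` and `βΔ = log(√(q²−m²)/(2(1−q)))` hold. -/
theorem gradient_G_vanishes_iff (β Δ m q : ℝ) (hβ : 0 < β)
    (hm : 0 < |m|) (hmq : |m| < q) (hq : q < 1) :
    fderiv ℝ (Gfun β Δ) (m, q) = 0 ↔
      (Real.tanh (β * m) = m / q ∧
        β * Δ = Real.log (Real.sqrt (q ^ 2 - m ^ 2) / (2 * (1 - q)))) := by
  obtain ⟨hm1, hm2⟩ := abs_lt.mp hmq
  have hq0 : 0 < q := lt_of_le_of_lt (abs_nonneg m) hmq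
  have hqm : 0 < q - m := by linarith
  have hqpm : 0 < q + m := by linarith
  have h1q : 0 < 1 - q := by linarith
  set L1 : ℝ × ℝ →L[ℝ] ℝ := ContinuousLinearMap.fst ℝ ℝ ℝ with hL1
  set L2 : ℝ × ℝ →L[ℝ] ℝ := ContinuousLinearMap.snd ℝ ℝ ℝ with hL2
  have hu : HasFDerivAt (fun p : ℝ × ℝ => p.1) L1 (m, q) := hasFDerivAt_fst
  have hv : HasFDerivAt (fun p : ℝ × ℝ => p.2) L2 (m, q) := hasFDerivAt_snd
  have hla : HasFDerivAt (fun p : ℝ × ℝ => Real.log (p.2 + p.1)) ((q+m)⁻¹ • (L2 + L1)) (m, q) :=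
    (hv.add hu).log (by simpa using ne_of_gt hqpm)
  have hlb : HasFDerivAt (fun p : ℝ × ℝ => Real.log (p.2 - p.1)) ((q-m)⁻¹ • (L2 - L1)) (m, q) :=
    (hv.sub hu).log (by simpa using ne_of_gt hqm)
  have hlc : HasFDerivAt (fun p : ℝ × ℝ => Real.log (1 - p.2)) ((1-q)⁻¹ • (-L2)) (m, q) := by
    have h0 : HasFDerivAt (fun p : ℝ × ℝ => 1 - p.2) (-L2) (m, q) := hv.const_sub 1
    exact h0.log (by simpa using ne_of_gt h1q)
  have hld : HasFDerivAt (fun p : ℝ × ℝ => Real.log (2 * (1 - p.2)))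
      ((2*(1-q))⁻¹ • ((2:ℝ) • (-L2))) (m, q) := by
    have h0 : HasFDerivAt (fun p : ℝ × ℝ => 2 * (1 - p.2)) ((2:ℝ) • (-L2)) (m, q) :=
      (hv.const_sub 1).const_mul 2
    exact h0.log (by simpa using ne_of_gt (by positivity : (0:ℝ) < 2*(1-q)))
  have hT1 := hu.mul ((hla.sub hlb).mul_const (2:ℝ)⁻¹)
  have hT2 := hv.mul ((((hasFDerivAt_const (-(β*Δ)) ((m,q) : ℝ × ℝ)).add
      ((hla.add hlb).mul_const (2:ℝ)⁻¹)).sub hld))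
  have hT5 := ((hu.mul hu).const_mul β).mul_const (2:ℝ)⁻¹
  have hF := (((hT1.add hT2).add hlc).add
      (hasFDerivAt_const (Real.log (1 + 2*Real.exp (β*Δ))) ((m,q) : ℝ × ℝ))).sub hT5
  have hopen : IsOpen ({p : ℝ × ℝ | |p.1| < p.2} ∩ {p : ℝ × ℝ | p.2 < 1}) :=
    (isOpen_lt (continuous_fst.abs) continuous_snd).inter
      (isOpen_lt continuous_snd continuous_const)
  have hEq : Gfun β Δ =ᶠ[nhds ((m,q) : ℝ × ℝ)]
      (fun p : ℝ × ℝ => p.1 * ((Real.log (p.2+p.1) - Real.log (p.2-p.1)) * (2:ℝ)⁻¹) +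
        p.2 * (-(β*Δ) + (Real.log (p.2+p.1) + Real.log (p.2-p.1)) * (2:ℝ)⁻¹
                - Real.log (2*(1-p.2))) +
        Real.log (1-p.2) + Real.log (1 + 2*Real.exp (β*Δ)) - β * (p.1*p.1) * (2:ℝ)⁻¹) := by
    filter_upwards [hopen.mem_nhds ⟨hmq, hq⟩] with p hp
    exact Gfun_eq β Δ hp.1 hp.2
  have hG := hF.congr_of_eventuallyEq hEq
  rw [hG.fderiv, clm_zero_iff]
  apply and_congr
  · have e1 : ((m, q).1 • (2:ℝ)⁻¹ • ((q + m)⁻¹ • (L2 + L1) - (q - m)⁻¹ • (L2 - L1)) +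
        ((Real.log ((m, q).2 + (m, q).1) - Real.log ((m, q).2 - (m, q).1)) * 2⁻¹) • L1 +
        ((m, q).2 • ((0:ℝ × ℝ →L[ℝ] ℝ) + (2:ℝ)⁻¹ • ((q + m)⁻¹ • (L2 + L1) + (q - m)⁻¹ • (L2 - L1)) -
            (2 * (1 - q))⁻¹ • (2:ℝ) • -L2) +
          (-(β * Δ) + (Real.log ((m, q).2 + (m, q).1) + Real.log ((m, q).2 - (m, q).1)) * 2⁻¹ -
              Real.log (2 * (1 - (m, q).2))) • L2) +
        (1 - q)⁻¹ • -L2 + 0 - (2:ℝ)⁻¹ • β • ((m, q).1 • L1 + (m, q).1 • L1)) ((1:ℝ), (0:ℝ))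
        = (Real.log (q+m) - Real.log (q-m)) * (2:ℝ)⁻¹ - β * m := by
      simp only [hL1, hL2, ContinuousLinearMap.add_apply, ContinuousLinearMap.sub_apply,
        ContinuousLinearMap.smul_apply, ContinuousLinearMap.neg_apply,
        ContinuousLinearMap.zero_apply, ContinuousLinearMap.coe_fst',
        ContinuousLinearMap.coe_snd', smul_eq_mul]
      field_simp
      ring
    erw [e1, sub_eq_zero]
    have hart : (Real.log (q+m) - Real.log (q-m)) * (2:ℝ)⁻¹ = artanh (m/q) := by
      rw [artanh_div' hmq]; ring
    have habs : |m/q| < 1 := by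
      rw [abs_div, abs_of_pos hq0]
      exact (div_lt_one hq0).mpr hmq
    constructor
    · intro h
      rw [← h, hart, tanh_artanh' habs]
    · intro h
      have h2 : artanh (m/q) = β * m := by rw [← h, artanh_tanh']
      rw [hart, h2]
  · have e2 : ((m, q).1 • (2:ℝ)⁻¹ • ((q + m)⁻¹ • (L2 + L1) - (q - m)⁻¹ • (L2 - L1)) +
        ((Real.log ((m, q).2 + (m, q).1) - Real.log ((m, q).2 - (m, q).1)) * 2⁻¹) • L1 +
        ((m, q).2 • ((0:ℝ × ℝ →L[ℝ] ℝ) + (2:ℝ)⁻¹ • ((q + m)⁻¹ • (L2 + L1) + (q - m)⁻¹ • (L2 - L1)) -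
            (2 * (1 - q))⁻¹ • (2:ℝ) • -L2) +
          (-(β * Δ) + (Real.log ((m, q).2 + (m, q).1) + Real.log ((m, q).2 - (m, q).1)) * 2⁻¹ -
              Real.log (2 * (1 - (m, q).2))) • L2) +
        (1 - q)⁻¹ • -L2 + 0 - (2:ℝ)⁻¹ • β • ((m, q).1 • L1 + (m, q).1 • L1)) ((0:ℝ), (1:ℝ))
        = -(β * Δ) + (Real.log (q+m) + Real.log (q-m)) * (2:ℝ)⁻¹ - Real.log (2*(1-q)) := by
      simp only [hL1, hL2, ContinuousLinearMap.add_apply, ContinuousLinearMap.sub_apply,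
        ContinuousLinearMap.smul_apply, ContinuousLinearMap.neg_apply,
        ContinuousLinearMap.zero_apply, ContinuousLinearMap.coe_fst',
        ContinuousLinearMap.coe_snd', smul_eq_mul]
      field_simp
      ring
    have hs2 : 0 < q^2 - m^2 := by
      have := sq_lt_sq' hm1 hm2
      linarith
    have e3 : Real.log (Real.sqrt (q^2 - m^2) / (2*(1-q))) =
        (Real.log (q+m) + Real.log (q-m)) * (2:ℝ)⁻¹ - Real.log (2*(1-q)) := by
      rw [Real.log_div (ne_of_gt (Real.sqrt_pos.mpr hs2)) (by positivity),
        Real.log_sqrt (le_of_lt hs2),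
        show q^2 - m^2 = (q+m)*(q-m) by ring, Real.log_mul (ne_of_gt hqpm) (ne_of_gt hqm)]
      ring
    erw [e2, e3]
    constructor
    · intro h; linarith
    · intro h; linarith

end
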